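/- Let A = KQ/I be a Brauer graph algebra of a Brauer graph G, v a non-truncated vertex of G of multiplicity e_v, and γ = γ₁…γ_m the cycle of Q generated by v with s(γ₁) = x, where x is a non-truncated edge. Then the word γ^{e_v - 1}γ₁…γ_{m-1} is a direct string that ends in a deep, and it is the maximal direct string starting at x around v. -/

import Mathlib

/-!
A Brauer graph with multiplicities is encoded as a combinatorial map on a finite set
`H` of half-edges: `sigma` is the fixed-point-free involution pairing the two
half-edges of each edge, `rho` is the permutation whose cycles are the cyclic
orderings of half-edges around vertices, and `mult` is the multiplicity function
(constant on vertices, i.e. on `rho`-orbits).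

The quiver `Q` of the Brauer graph algebra has the edges of `G` (the
`sigma`-orbits) as vertices; for every half-edge `x` at a non-truncated vertex
there is an arrow from the edge of `x` to the edge of `rho x`, and these are all
the arrows.  We identify arrows with such half-edges.  Words in the double quiver
are lists of letters `(true, x)` (the arrow `x`) and `(false, x)` (its formal
inverse), and the string conditions coming from the relations of the Brauer graph
algebra are encoded below.
-/

structure BrauerGraphData (H : Type) where
  sigma : Equiv.Perm H
  rho : Equiv.Perm H
  invol : ∀ x, sigma (sigma x) = x
  noFix : ∀ x, sigma x ≠ x
  conn : ∀ x y, Relation.EqvGen (fun a b => sigma a = b ∨ rho a = b) x y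
  mult : H → ℕ
  multPos : ∀ x, 1 ≤ mult x
  multConst : ∀ x, mult (rho x) = mult x

namespace BrauerGraphData

variable {H : Type}

/-- The half-edge `x` sits at a truncated vertex (valency one, multiplicity one). -/
def TruncVert (G : BrauerGraphData H) (x : H) : Prop := G.rho x = x ∧ G.mult x = 1

/-- The half-edge `x` is an arrow of the quiver of the Brauer graph algebra. -/
def IsArrow (G : BrauerGraphData H) (x : H) : Prop := ¬ G.TruncVert x

/-- The edge of the half-edge `x` is truncated. -/
def TruncEdge (G : BrauerGraphData H) (x : H) : Prop :=
  G.TruncVert x ∨ G.TruncVert (G.sigma x)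

/-- The length of the cycle of `Q` generated by the vertex of `x` (the valency). -/
noncomputable def cyclen (G : BrauerGraphData H) (x : H) : ℕ :=
  Function.minimalPeriod (⇑G.rho) x

/-- Admissible consecutive pairs of letters in a string of a Brauer graph algebra:
two consecutive arrows (or two consecutive inverses) must be consecutive on a
vertex cycle, and at a change of direction the word must pass from one half-edge of
the meeting edge to the other. -/
def lok (G : BrauerGraphData H) : Bool × H → Bool × H → Prop
  | (true, x), (true, y) => y = G.rho x
  | (false, x), (false, y) => x = G.rho y
  | (true, x), (false, y) => G.sigma (G.rho x) = G.rho y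
  | (false, x), (true, y) => G.sigma x = y

/-- The direct word of length `k` along the vertex cycle starting at the arrow `x`. -/
def dirRun (G : BrauerGraphData H) (x : H) (k : ℕ) : List (Bool × H) :=
  (List.range k).map (fun i => (true, (⇑G.rho)^[i] x))

/-- The inverse word of length `k`: the formal inverse of the direct word of length
`k` along the vertex cycle starting at the arrow `x`. -/
def invRun (G : BrauerGraphData H) (x : H) (k : ℕ) : List (Bool × H) :=
  ((List.range k).map (fun i => ((false : Bool), (⇑G.rho)^[i] x))).reverse

/-- `w` is a (nonempty) string of the Brauer graph algebra: all its letters are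
arrows, consecutive letters are admissible, and it contains no direct or inverse
run of length `mult x * cyclen x` (such runs lie in the relation ideal). -/
def IsString (G : BrauerGraphData H) (w : List (Bool × H)) : Prop :=
  w ≠ [] ∧ (∀ l ∈ w, G.IsArrow l.2) ∧ w.Chain' G.lok ∧
    (¬ ∃ x : H, (G.dirRun x (G.mult x * G.cyclen x)).IsInfix w) ∧
    (¬ ∃ x : H, (G.invRun x (G.mult x * G.cyclen x)).IsInfix w)

/-- `w` ends in a deep: no arrow can be added at the end of `w`. -/
def EndsInDeep (G : BrauerGraphData H) (w : List (Bool × H)) : Prop :=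
  ¬ ∃ y : H, G.IsString (w ++ [(true, y)])

/-- `w` ends on a peak: no formal inverse can be added at the end of `w`. -/
def EndsOnPeak (G : BrauerGraphData H) (w : List (Bool × H)) : Prop :=
  ¬ ∃ y : H, G.IsString (w ++ [((false : Bool), y)])

end BrauerGraphData

open BrauerGraphData

namespace BGAux

variable {H : Type} [Fintype H] (G : BrauerGraphData H)

lemma mem_pp (z : H) : z ∈ Function.periodicPts ⇑G.rho := by
  refine ⟨orderOf G.rho, orderOf_pos G.rho, ?_⟩
  show (⇑G.rho)^[orderOf G.rho] z = z
  rw [Equiv.Perm.iterate_eq_pow, pow_orderOf_eq_one]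
  rfl

lemma cyclen_pos (z : H) : 0 < G.cyclen z :=
  Function.minimalPeriod_pos_of_mem_periodicPts (mem_pp G z)

lemma cyclen_iter (z : H) (i : ℕ) : G.cyclen ((⇑G.rho)^[i] z) = G.cyclen z :=
  Function.minimalPeriod_apply_iterate (mem_pp G z) i

lemma mult_iter (z : H) (i : ℕ) : G.mult ((⇑G.rho)^[i] z) = G.mult z := by
  induction i with
  | zero => rfl
  | succ n ih => rw [Function.iterate_succ_apply', G.multConst, ih]

lemma rho_fix (z : H) (h1 : G.cyclen z = 1) : G.rho z = z := by
  have := Function.iterate_minimalPeriod (f := ⇑G.rho) (x := z)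
  rw [show Function.minimalPeriod ⇑G.rho z = G.cyclen z from rfl, h1] at this
  simpa using this

lemma arrow_iter {z : H} (hv : G.IsArrow z) (i : ℕ) : G.IsArrow ((⇑G.rho)^[i] z) := by
  rintro ⟨hfix, hm1⟩
  apply hv
  have h1 : G.cyclen ((⇑G.rho)^[i] z) = 1 :=
    le_antisymm (Function.IsPeriodicPt.minimalPeriod_le one_pos
      (show Function.IsPeriodicPt (⇑G.rho) 1 ((⇑G.rho)^[i] z) from hfix))
      (cyclen_pos G _)
  have h2 : G.cyclen z = 1 := by rw [← cyclen_iter G z i]; exact h1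
  exact ⟨rho_fix G z h2, by rw [← mult_iter G z i]; exact hm1⟩

lemma two_le_N {z : H} (hv : G.IsArrow z) : 2 ≤ G.mult z * G.cyclen z := by
  rcases Nat.lt_or_ge (G.cyclen z) 2 with h | h
  · have h1 : G.cyclen z = 1 := le_antisymm (by omega) (cyclen_pos G z)
    have hm : G.mult z ≠ 1 := fun hm => hv ⟨rho_fix G z h1, hm⟩
    have := G.multPos z
    rw [h1, mul_one]
    omega
  · exact h.trans (Nat.le_mul_of_pos_left _ (G.multPos z))

lemma dirRun_length (z : H) (k : ℕ) : (G.dirRun z k).length = k := by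
  simp [dirRun]

lemma dirRun_succ (z : H) (k : ℕ) :
    G.dirRun z (k + 1) = G.dirRun z k ++ [(true, (⇑G.rho)^[k] z)] := by
  simp [dirRun, List.range_succ]

lemma dirRun_mem {z : H} {k : ℕ} {a : Bool × H} (h : a ∈ G.dirRun z k) :
    ∃ i < k, a = (true, (⇑G.rho)^[i] z) := by
  simp only [dirRun, List.mem_map, List.mem_range] at h
  obtain ⟨i, hi, rfl⟩ := h
  exact ⟨i, hi, rfl⟩

lemma isString_dirRun {z : H} (hv : G.IsArrow z) {k : ℕ} (h1 : 1 ≤ k)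
    (h2 : k < G.mult z * G.cyclen z) : G.IsString (G.dirRun z k) := by
  refine ⟨?_, ?_, ?_, ?_, ?_⟩
  · intro h
    have := dirRun_length G z k
    rw [h] at this
    simp at this
    omega
  · intro l hl
    obtain ⟨i, _, rfl⟩ := dirRun_mem G hl
    exact arrow_iter G hv i
  · rw [show List.Chain' G.lok (G.dirRun z k) ↔ _ from List.isChain_iff_getElem]
    intro i hi
    rw [dirRun_length] at hi
    have hg : ∀ j (hj : j < k), (G.dirRun z k)[j]'(by rw [dirRun_length]; exact hj)
        = (true, (⇑G.rho)^[j] z) := by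
      intro j hj
      simp [dirRun]
    rw [hg i (by omega), hg (i + 1) (by omega)]
    show (⇑G.rho)^[i + 1] z = G.rho ((⇑G.rho)^[i] z)
    exact Function.iterate_succ_apply' _ _ _
  · rintro ⟨y, hy⟩
    have hposy : 0 < G.mult y * G.cyclen y :=
      Nat.mul_pos (G.multPos y) (cyclen_pos G y)
    have hmem : ((true : Bool), y) ∈ G.dirRun y (G.mult y * G.cyclen y) := by
      simp only [dirRun, List.mem_map, List.mem_range]
      exact ⟨0, hposy, rfl⟩
    have hmem' := hy.subset hmem
    obtain ⟨i, _, hiy⟩ := dirRun_mem G hmem'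
    have hy2 : y = (⇑G.rho)^[i] z := by simpa using hiy
    have hlen := hy.length_le
    rw [dirRun_length, dirRun_length, hy2, mult_iter, cyclen_iter] at hlen
    omega
  · rintro ⟨y, hy⟩
    have hposy : 0 < G.mult y * G.cyclen y :=
      Nat.mul_pos (G.multPos y) (cyclen_pos G y)
    have hmem : ((false : Bool), y) ∈ G.invRun y (G.mult y * G.cyclen y) := by
      simp only [invRun, List.mem_reverse, List.mem_map, List.mem_range]
      exact ⟨0, hposy, rfl⟩
    have hmem' := hy.subset hmem
    obtain ⟨i, _, hiy⟩ := dirRun_mem G hmem'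
    simp at hiy

end BGAux

open BGAux

/-- Let `A = KQ/I` be the Brauer graph algebra of a Brauer graph
`G`, let `v` be a non-truncated vertex of `G` of multiplicity `e_v` and let
`γ = γ₁…γ_m` be the cycle of `Q` generated by `v` with `s(γ₁) = x` a non-truncated
edge.  Identifying `γ₁` with a half-edge `z` of `x` at `v` (so `γ_{i+1} = ρ γ_i` and
`m = cyclen z`, `e_v = mult z`), the word `γ^{e_v − 1} γ₁ … γ_{m−1}` — the direct
run of length `e_v * m − 1` starting at `z` — is a direct string ending in a deep,
and it is the maximal direct string starting at `x` around `v`. -/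
theorem maximal_direct_string_ends_in_deep
    (H : Type) [Fintype H] (G : BrauerGraphData H) (z : H)
    (hv : G.IsArrow z) (hx : ¬ G.TruncEdge z) :
    G.IsString (G.dirRun z (G.mult z * G.cyclen z - 1)) ∧
      G.EndsInDeep (G.dirRun z (G.mult z * G.cyclen z - 1)) ∧
      ∀ k : ℕ, G.IsString (G.dirRun z k) → k ≤ G.mult z * G.cyclen z - 1 := by
  have hN : 2 ≤ G.mult z * G.cyclen z := two_le_N G hv
  set N := G.mult z * G.cyclen z with hNdef
  refine ⟨isString_dirRun G hv (by omega) (by omega), ?_, ?_⟩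
  · rintro ⟨y, hs⟩
    obtain ⟨j, hj⟩ : ∃ j, N - 1 = j + 1 := ⟨N - 2, by omega⟩
    have hch := hs.2.2.1
    rw [hj, dirRun_succ] at hch
    have hlast := (List.isChain_append.1 hch).2.2
    have hy : y = (⇑G.rho)^[j + 1] z := by
      have hl : G.lok (true, (⇑G.rho)^[j] z) (true, y) :=
        hlast (true, (⇑G.rho)^[j] z) (by rw [List.getLast?_concat]; rfl) (true, y) rfl
      have hl' : y = G.rho ((⇑G.rho)^[j] z) := hl
      rw [Function.iterate_succ_apply']
      exact hl'
    have heq : G.dirRun z (N - 1) ++ [(true, y)] = G.dirRun z N := by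
      have hN' : N = j + 1 + 1 := by omega
      rw [hy, hj, hN']
      exact (dirRun_succ G z (j + 1)).symm
    exact hs.2.2.2.1 ⟨z, by rw [heq]⟩
  · intro k hk
    by_contra hcon
    have hNk : N ≤ k := by omega
    have hpre : G.dirRun z N <+: G.dirRun z k := by
      have ht := List.take_prefix N (G.dirRun z k)
      rwa [show (G.dirRun z k).take N = G.dirRun z N by
        simp [dirRun, ← List.map_take, List.take_range, Nat.min_eq_left hNk]] at ht
    exact hk.2.2.2.1 ⟨z, hpre.isInfix⟩
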